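/- Let L_h : ℝⁿ → ℝ be convex and differentiable, and for positive diagonal Λ define L(θ, Λ) = L_h(θ) + θᵀΛθ and M(θ, Λ) = −(1/2)[θᵀΛθ + log det(Λ⁻¹H + I)] with H symmetric positive semidefinite. Suppose (θ_⋆, Λ_⋆) satisfies θ_⋆ ∈ argmin_θ L(θ, Λ_⋆) and Λ_⋆ ∈ argmax_Λ M(θ_⋆, Λ). Then the first-order conditions ∇L_h(θ_⋆) + 2Λ_⋆θ_⋆ = 0 and, for each i, (θ_⋆)ᵢ² = [(H + Λ_⋆)⁻¹H Λ_⋆⁻¹]_{ii} hold simultaneously. -/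

import Mathlib

open Matrix

/-- First-order characterisation of the joint stationary point `(θ⋆, Λ⋆)` of the alternating
optimisation of the regularised linear-model loss in `θ` and the model evidence in the
diagonal prior precision `Λ`. -/
theorem stmt_17 {n : ℕ}
    (Lh : (Fin n → ℝ) → ℝ)
    (hLconv : ConvexOn ℝ Set.univ Lh)
    (hLdiff : Differentiable ℝ Lh)
    (H : Matrix (Fin n) (Fin n) ℝ) (hH : H.PosSemidef)
    (θs : Fin n → ℝ) (lams : Fin n → ℝ) (hlams : ∀ i, 0 < lams i)
    (M : (Fin n → ℝ) → ℝ)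
    (hM : ∀ lam, M lam = -(1 / 2) * ((θs ⬝ᵥ (Matrix.diagonal lam *ᵥ θs))
      + Real.log ((Matrix.diagonal lam)⁻¹ * H + 1).det))
    (hmin : IsMinOn (fun θ => Lh θ + θ ⬝ᵥ (Matrix.diagonal lams *ᵥ θ)) Set.univ θs)
    (hmax : ∀ lam : Fin n → ℝ, (∀ i, 0 < lam i) → M lam ≤ M lams) :
    (∀ v, fderiv ℝ Lh θs v + 2 * (θs ⬝ᵥ (Matrix.diagonal lams *ᵥ v)) = 0)
      ∧ ∀ i, (θs i) ^ 2
          = ((H + Matrix.diagonal lams)⁻¹ * H * (Matrix.diagonal lams)⁻¹) i i := by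
  classical
  constructor
  · -- first order condition in θ
    set Dq : (Fin n → ℝ) →L[ℝ] ℝ :=
      ∑ j : Fin n, lams j • ((θs j • (ContinuousLinearMap.proj j : (Fin n → ℝ) →L[ℝ] ℝ))
        + (θs j • (ContinuousLinearMap.proj j : (Fin n → ℝ) →L[ℝ] ℝ))) with hDq
    have hqform : ∀ θ : Fin n → ℝ,
        θ ⬝ᵥ (Matrix.diagonal lams *ᵥ θ) = ∑ j, lams j * (θ j * θ j) := by
      intro θ
      simp only [dotProduct, Matrix.mulVec_diagonal]
      exact Finset.sum_congr rfl fun j _ => by ring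
    have hproj : ∀ j : Fin n, HasFDerivAt (fun θ : Fin n → ℝ => θ j)
        (ContinuousLinearMap.proj j : (Fin n → ℝ) →L[ℝ] ℝ) θs :=
      fun j => hasFDerivAt_apply j θs
    have h2 : HasFDerivAt (fun θ : Fin n → ℝ => ∑ j, lams j * (θ j * θ j)) Dq θs :=
      HasFDerivAt.fun_sum fun j _ => ((hproj j).mul (hproj j)).const_mul (lams j)
    have hqd : HasFDerivAt (fun θ : Fin n → ℝ => θ ⬝ᵥ (Matrix.diagonal lams *ᵥ θ)) Dq θs :=
      h2.congr_of_eventuallyEq (Filter.Eventually.of_forall hqform)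
    have hf : HasFDerivAt (fun θ => Lh θ + θ ⬝ᵥ (Matrix.diagonal lams *ᵥ θ))
        (fderiv ℝ Lh θs + Dq) θs := ((hLdiff θs).hasFDerivAt).add hqd
    have hz : fderiv ℝ Lh θs + Dq = 0 :=
      (hmin.isLocalMin Filter.univ_mem).hasFDerivAt_eq_zero hf
    intro v
    have hzv : fderiv ℝ Lh θs v + Dq v = 0 := by
      have := congrArg (fun L : (Fin n → ℝ) →L[ℝ] ℝ => L v) hz
      simpa using this
    have hDqv : Dq v = 2 * (θs ⬝ᵥ (Matrix.diagonal lams *ᵥ v)) := by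
      simp only [hDq, ContinuousLinearMap.sum_apply, ContinuousLinearMap.smul_apply,
        ContinuousLinearMap.add_apply, ContinuousLinearMap.proj_apply, smul_eq_mul,
        dotProduct, Matrix.mulVec_diagonal, Finset.mul_sum]
      exact Finset.sum_congr rfl fun j _ => by ring
    rw [← hDqv]; exact hzv
  · -- first order condition in Λ
    intro i
    set Λ : Matrix (Fin n) (Fin n) ℝ := Matrix.diagonal lams with hΛdef
    set A : Matrix (Fin n) (Fin n) ℝ := H + Λ with hAdef
    have hΛpd : Λ.PosDef := Matrix.posDef_diagonal_iff.mpr hlams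
    have hApd : A.PosDef := Matrix.PosDef.posSemidef_add hH hΛpd
    have hdetA : 0 < A.det := hApd.det_pos
    set b : ℝ := A.adjugate i i with hbdef
    -- the determinant is an affine function of the i-th diagonal entry
    have hrow : ∀ t : ℝ, H + Matrix.diagonal (Function.update lams i t)
        = A.updateRow i (A i + (t - lams i) • (Pi.single i 1 : Fin n → ℝ)) := by
      intro t
      ext j k
      rcases eq_or_ne j i with rfl | hj
      · rw [Matrix.updateRow_self]
        rcases eq_or_ne k j with rfl | hk
        · simp only [Matrix.add_apply, hAdef, hΛdef, Matrix.diagonal_apply_eq,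
            Function.update_self, Pi.add_apply, Pi.smul_apply, Pi.single_eq_same,
            smul_eq_mul]
          ring
        · simp only [Matrix.add_apply, hAdef, hΛdef, Matrix.diagonal_apply,
            Function.update_apply, Pi.add_apply, Pi.smul_apply,
            Pi.single_eq_of_ne hk, smul_eq_mul, if_neg (Ne.symm hk)]
          ring
      · rw [Matrix.updateRow_ne hj]
        simp only [Matrix.add_apply, hAdef, hΛdef, Matrix.diagonal_apply,
          Function.update_apply]
        rcases eq_or_ne j k with rfl | hjk
        · rw [if_pos rfl, if_pos rfl, if_neg hj]
        · rw [if_neg hjk, if_neg hjk]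
    have hdet : ∀ t : ℝ, (H + Matrix.diagonal (Function.update lams i t)).det
        = A.det + (t - lams i) * b := by
      intro t
      rw [hrow t, Matrix.det_updateRow_add, Matrix.det_updateRow_smul,
        Matrix.updateRow_eq_self, ← Matrix.adjugate_apply]
    set C1 : ℝ := ∑ j ∈ Finset.univ \ {i}, lams j * (θs j * θs j) with hC1
    set C2 : ℝ := ∑ j ∈ Finset.univ \ {i}, Real.log (lams j) with hC2
    have hupos : ∀ t : ℝ, 0 < t → ∀ j, 0 < Function.update lams i t j := by
      intro t ht j
      rcases eq_or_ne j i with rfl | hji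
      · simpa using ht
      · simpa [Function.update_apply, hji] using hlams j
    -- explicit formula for the evidence as a function of the i-th precision
    have hformula : ∀ t ∈ Set.Ioi (0:ℝ), M (Function.update lams i t)
        = -(1/2) * ((t * (θs i * θs i) + C1)
            + (Real.log (A.det + (t - lams i) * b) - (Real.log t + C2))) := by
      intro t ht
      have ht0 : (0:ℝ) < t := ht
      have hupd := hupos t ht0
      have hDpd : (Matrix.diagonal (Function.update lams i t)).PosDef :=
        Matrix.posDef_diagonal_iff.mpr hupd
      have hDdet : 0 < (Matrix.diagonal (Function.update lams i t)).det := hDpd.det_pos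
      have hSpd : (H + Matrix.diagonal (Function.update lams i t)).PosDef :=
        Matrix.PosDef.posSemidef_add hH hDpd
      have hSdet : 0 < (H + Matrix.diagonal (Function.update lams i t)).det := hSpd.det_pos
      have hDunit : IsUnit (Matrix.diagonal (Function.update lams i t)).det :=
        hDdet.ne'.isUnit
      have hsplit : ((Matrix.diagonal (Function.update lams i t))⁻¹ * H + 1).det
          = (H + Matrix.diagonal (Function.update lams i t)).det
            / (Matrix.diagonal (Function.update lams i t)).det := by
        have h1 : (Matrix.diagonal (Function.update lams i t))⁻¹
              * (H + Matrix.diagonal (Function.update lams i t))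
            = (Matrix.diagonal (Function.update lams i t))⁻¹ * H + 1 := by
          rw [mul_add, Matrix.nonsing_inv_mul _ hDunit]
        rw [← h1, Matrix.det_mul, Matrix.det_nonsing_inv, Ring.inverse_eq_inv,
          inv_mul_eq_div]
      have hquad : θs ⬝ᵥ (Matrix.diagonal (Function.update lams i t) *ᵥ θs)
          = t * (θs i * θs i) + C1 := by
        have h0 : θs ⬝ᵥ (Matrix.diagonal (Function.update lams i t) *ᵥ θs)
            = ∑ j, Function.update lams i t j * (θs j * θs j) := by
          simp only [dotProduct, Matrix.mulVec_diagonal]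
          exact Finset.sum_congr rfl fun j _ => by ring
        have hc : ∀ j, Function.update lams i t j * (θs j * θs j)
            = Function.update (fun j => lams j * (θs j * θs j)) i (t * (θs i * θs i)) j :=
          fun j => Function.apply_update (fun j x => x * (θs j * θs j)) lams i t j
        rw [h0, Finset.sum_congr rfl fun j _ => hc j,
          Finset.sum_update_of_mem (Finset.mem_univ i)]
      have hlogD : Real.log (Matrix.diagonal (Function.update lams i t)).det
          = Real.log t + C2 := by
        rw [Matrix.det_diagonal, Real.log_prod (fun j _ => (hupd j).ne')]
        have hc : ∀ j, Real.log (Function.update lams i t j)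
            = Function.update (fun j => Real.log (lams j)) i (Real.log t) j :=
          fun j => Function.apply_update (fun _ x => Real.log x) lams i t j
        rw [Finset.sum_congr rfl fun j _ => hc j,
          Finset.sum_update_of_mem (Finset.mem_univ i)]
      rw [hM, hsplit, Real.log_div hSdet.ne' hDdet.ne', hquad, hlogD, hdet t]
    -- stationarity via the derivative at the interior maximum
    have h1 : HasDerivAt (fun t : ℝ => A.det + (t - lams i) * b) b (lams i) := by
      simpa using (((hasDerivAt_id (lams i)).sub_const (lams i)).mul_const b).const_add A.det
    have h2 : HasDerivAt (fun t : ℝ => Real.log (A.det + (t - lams i) * b))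
        (b / A.det) (lams i) := by
      have := h1.log (by simp [hdetA.ne'])
      simpa using this
    have h3 : HasDerivAt Real.log (lams i)⁻¹ (lams i) := Real.hasDerivAt_log (hlams i).ne'
    have h4 : HasDerivAt (fun t : ℝ => t * (θs i * θs i) + C1) (θs i * θs i) (lams i) := by
      simpa using ((hasDerivAt_id (lams i)).mul_const (θs i * θs i)).add_const C1
    have h5 : HasDerivAt (fun t : ℝ => Real.log t + C2) (lams i)⁻¹ (lams i) := h3.add_const C2
    have hg : HasDerivAt (fun t : ℝ => -(1/2) * ((t * (θs i * θs i) + C1)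
          + (Real.log (A.det + (t - lams i) * b) - (Real.log t + C2))))
        (-(1/2) * ((θs i * θs i) + (b / A.det - (lams i)⁻¹))) (lams i) :=
      (h4.add (h2.sub h5)).const_mul (-(1/2))
    have hψ : HasDerivAt (fun t : ℝ => M (Function.update lams i t))
        (-(1/2) * ((θs i * θs i) + (b / A.det - (lams i)⁻¹))) (lams i) :=
      hg.congr_of_eventuallyEq
        (Filter.eventuallyEq_of_mem (Ioi_mem_nhds (hlams i)) hformula)
    have hmaxloc : IsLocalMax (fun t : ℝ => M (Function.update lams i t)) (lams i) := by
      have hms : IsMaxOn (fun t : ℝ => M (Function.update lams i t)) (Set.Ioi 0) (lams i) := by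
        intro t ht
        have := hmax (Function.update lams i t) (hupos t ht)
        simpa [Function.update_eq_self] using this
      exact hms.isLocalMax (Ioi_mem_nhds (hlams i))
    have hzero : -(1/2) * ((θs i * θs i) + (b / A.det - (lams i)⁻¹)) = 0 :=
      hmaxloc.hasDerivAt_eq_zero hψ
    have hθ : θs i * θs i = (lams i)⁻¹ - b / A.det := by linarith
    -- identify the right-hand side
    have hA1 : A⁻¹ * A = 1 := Matrix.nonsing_inv_mul _ hdetA.ne'.isUnit
    have hΛ1 : Λ * Λ⁻¹ = 1 := Matrix.mul_nonsing_inv _ hΛpd.det_pos.ne'.isUnit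
    have hHA : H = A - Λ := by rw [hAdef, add_sub_cancel_right]
    have hkey : A⁻¹ * H * Λ⁻¹ = Λ⁻¹ - A⁻¹ := by
      rw [hHA, mul_sub, sub_mul, hA1, one_mul, mul_assoc, hΛ1, mul_one]
    have hΛinv : Λ⁻¹ = Matrix.diagonal (fun j => (lams j)⁻¹) := by
      apply Matrix.inv_eq_right_inv
      rw [hΛdef, Matrix.diagonal_mul_diagonal]
      have : (fun j => lams j * (lams j)⁻¹) = fun _ => (1:ℝ) :=
        funext fun j => mul_inv_cancel₀ (hlams j).ne'
      rw [this, Matrix.diagonal_one]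
    have hAinv : A⁻¹ i i = (A.det)⁻¹ * b := by
      rw [Matrix.inv_def]
      simp [Matrix.smul_apply, Ring.inverse_eq_inv, hbdef]
    rw [hkey, Matrix.sub_apply, hΛinv, Matrix.diagonal_apply_eq, hAinv, pow_two, hθ]
    ring
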